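/- Let μ = (B2', H1', u) be a piece-unifier of R2 with R1 satisfying the stability property. Then the compact composition R2 •_μ R1, defined as the formula ∀x1' ∀y1 ∃z1 ∀x2' ∀y2' (u(B1) ∧ u(B2\B2') → ∃z2 (u(H1) ∧ u(H2))), is logically equivalent to the existential composition R2 ∘_μ R1 = ∀ (u(B1) ∧ u(B2\B2') → ∃ (u(H1) ∧ u(H2))), where in the latter all universal quantifiers precede all existential quantifiers. -/
import Mathlib


open scoped Classical
noncomputable section

namespace ER

/-- Terms: constants or variables (variables occurring in instances are called nulls). -/
inductive Term where
  | const : ℕ → Term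
  | var : ℕ → Term
deriving DecidableEq

def Term.isConst : Term → Prop
  | .const _ => True
  | .var _ => False

/-- An atom `p(t₁,…,tₙ)`. -/
structure Atom where
  pred : ℕ
  args : List Term
deriving DecidableEq

def Atom.terms (a : Atom) : Set Term := {t | t ∈ a.args}
def Atom.vars (a : Atom) : Set ℕ := {v | Term.var v ∈ a.args}

def termsOf (S : Set Atom) : Set Term := ⋃ a ∈ S, a.terms
def varsOf (S : Set Atom) : Set ℕ := ⋃ a ∈ S, a.vars
/-- The nulls (non-constant terms) occurring in a set of atoms. -/
def nullsOf (S : Set Atom) : Set Term := {t | t ∈ termsOf S ∧ ¬ t.isConst}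

def Term.subst (σ : ℕ → Term) : Term → Term
  | .const c => .const c
  | .var v => σ v

def Atom.subst (σ : ℕ → Term) (a : Atom) : Atom := ⟨a.pred, a.args.map (Term.subst σ)⟩
def substSet (σ : ℕ → Term) (S : Set Atom) : Set Atom := (Atom.subst σ) '' S

/-- A homomorphism from `S1` to `S2`: a substitution of variables by terms mapping `S1` into `S2`. -/
def isHom (σ : ℕ → Term) (S1 S2 : Set Atom) : Prop := substSet σ S1 ⊆ S2

/-- An injective homomorphism (injective on the terms of the source). -/
def isInjHom (σ : ℕ → Term) (S1 S2 : Set Atom) : Prop :=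
  isHom σ S1 S2 ∧ Set.InjOn (Term.subst σ) (termsOf S1)

/-- An instance is a finite set of ground atoms. -/
def IsInstance (I : Set Atom) : Prop := I.Finite ∧ ∀ t ∈ termsOf I, t.isConst

/-- An existential rule, given by its body and head. -/
structure Rule where
  body : Set Atom
  head : Set Atom

def Rule.frontier (R : Rule) : Set ℕ := varsOf R.body ∩ varsOf R.head
def Rule.exist (R : Rule) : Set ℕ := varsOf R.head \ varsOf R.body

/-- Well-formed rule: finite non-empty body and head, no constants. -/
def WfRule (R : Rule) : Prop :=
  R.body.Finite ∧ R.head.Finite ∧ R.body.Nonempty ∧ R.head.Nonempty ∧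
  ∀ t ∈ termsOf (R.body ∪ R.head), ¬ t.isConst

def WfList (L : List Rule) : Prop := ∀ R ∈ L, WfRule R

/-- Restriction of a substitution to a set of variables (default value elsewhere). -/
def restrict (f : ℕ → Term) (F : Set ℕ) : ℕ → Term :=
  fun v => if v ∈ F then f v else Term.const 0

/-- A semi-oblivious naming of nulls for the rules of `L`: the null created for an
existential variable depends only on the rule and the restriction of the trigger to the
frontier, and distinct such data yield distinct nulls. -/
def SONaming (L : List Rule) (ν : Rule → (ℕ → Term) → ℕ → ℕ) : Prop :=
  (∀ R ∈ L, ∀ f g : ℕ → Term,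
      restrict f R.frontier = restrict g R.frontier → ν R f = ν R g) ∧
  (∀ R ∈ L, ∀ R' ∈ L, ∀ f f' x x', ν R f x = ν R' f' x' →
      R = R' ∧ restrict f R.frontier = restrict f' R'.frontier ∧ x = x')

/-- The safe extension of a trigger `π`, replacing each existential variable by its null. -/
def safeSub (ν : Rule → (ℕ → Term) → ℕ → ℕ) (R : Rule) (π : ℕ → Term) : ℕ → Term :=
  fun y => if y ∈ R.exist then Term.var (ν R (restrict π R.frontier) y) else π y

/-- One breadth-first semi-oblivious chase step. -/
def chaseStep (ν : Rule → (ℕ → Term) → ℕ → ℕ) (L : List Rule) (S : Set Atom) : Set Atom :=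
  S ∪ {a | ∃ R ∈ L, ∃ π : ℕ → Term, isHom π R.body S ∧ a ∈ substSet (safeSub ν R π) R.head}

/-- The breadth-first semi-oblivious chase. -/
def chaseF (ν : Rule → (ℕ → Term) → ℕ → ℕ) (L : List Rule) (I : Set Atom) : ℕ → Set Atom
  | 0 => I
  | k + 1 => chaseStep ν L (chaseF ν L I k)

def chaseInf (ν : Rule → (ℕ → Term) → ℕ → ℕ) (L : List Rule) (I : Set Atom) : Set Atom :=
  ⋃ k, chaseF ν L I k

/-- `L'` parallelises `L`. -/
def Parallelises (L' L : List Rule) : Prop :=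
  ∀ ν ν', SONaming L ν → SONaming L' ν' → ∀ I, IsInstance I →
    (∃ σ, isInjHom σ (chaseInf ν L I) (chaseF ν' L' I 1)) ∧
    (∃ σ, isHom σ (chaseF ν' L' I 1) (chaseInf ν L I))

def Parallelisable (L : List Rule) : Prop := ∃ L', WfList L' ∧ Parallelises L' L

/-- Boundedness of the semi-oblivious chase, uniformly over all instances. -/
def Bounded (L : List Rule) : Prop :=
  ∃ k, ∀ ν, SONaming L ν → ∀ I, IsInstance I → chaseF ν L I k = chaseInf ν L I

def ChaseFinite (L : List Rule) : Prop :=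
  ∀ ν, SONaming L ν → ∀ I, IsInstance I → ∃ k, chaseF ν L I k = chaseInf ν L I

/-- Two atoms are `T`-linked if they share a term of `T`. -/
def linked (T : Set Term) (a b : Atom) : Prop := ∃ t ∈ T, t ∈ a.terms ∧ t ∈ b.terms

/-- Connectivity in `S` by a path of atoms where consecutive atoms share a term of `T`. -/
def connectedIn (S : Set Atom) (T : Set Term) (a b : Atom) : Prop :=
  a ∈ S ∧ b ∈ S ∧ Relation.ReflTransGen (fun x y => x ∈ S ∧ y ∈ S ∧ linked T x y) a b

/-- `P` is closed in `S` w.r.t. `T`-linkedness. -/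
def closedIn (S : Set Atom) (T : Set Term) (P : Set Atom) : Prop :=
  ∀ a ∈ S, ∀ b ∈ P, linked T a b → a ∈ P

/-- A piece of `S` w.r.t. `T`: a non-empty subset closed under `T`-linkedness and minimal such. -/
def IsPiece (S : Set Atom) (T : Set Term) (P : Set Atom) : Prop :=
  P.Nonempty ∧ P ⊆ S ∧ closedIn S T P ∧
  ∀ P', P' ⊆ P → P'.Nonempty → closedIn S T P' → P' = P

/-- A single-piece rule: its head is a piece of itself w.r.t. its existential variables. -/
def SinglePiece (R : Rule) : Prop := IsPiece R.head (Term.var '' R.exist) R.head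

/-- The rule used at step `k` of a derivation. -/
def ruleAt (L : List Rule) (r : ℕ → ℕ) (k : ℕ) : Rule := L.getD (r k) ⟨∅, ∅⟩

/-- The set of atoms produced by the `k`-th rule application of a derivation. -/
def producedAt (ν : Rule → (ℕ → Term) → ℕ → ℕ) (L : List Rule) (r : ℕ → ℕ)
    (π : ℕ → ℕ → Term) (k : ℕ) : Set Atom :=
  substSet (safeSub ν (ruleAt L r k) (π k)) (ruleAt L r k).head

def derivState (ν : Rule → (ℕ → Term) → ℕ → ℕ) (L : List Rule) (I : Set Atom)
    (r : ℕ → ℕ) (π : ℕ → ℕ → Term) : ℕ → Set Atom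
  | 0 => I
  | k + 1 => derivState ν L I r π k ∪ producedAt ν L r π k

/-- An `R`-derivation of length `n` from `I`: each step applies a trigger. -/
def IsDeriv (ν : Rule → (ℕ → Term) → ℕ → ℕ) (L : List Rule) (I : Set Atom) (n : ℕ)
    (r : ℕ → ℕ) (π : ℕ → ℕ → Term) : Prop :=
  ∀ k < n, r k < L.length ∧ isHom (π k) (ruleAt L r k).body (derivState ν L I r π k)

/-- A pieceful derivation: each trigger maps its rule's frontier entirely into the terms of
the initial instance, or entirely into the terms produced by a single earlier application. -/
def PiecefulDeriv (ν : Rule → (ℕ → Term) → ℕ → ℕ) (L : List Rule) (I : Set Atom) (n : ℕ)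
    (r : ℕ → ℕ) (π : ℕ → ℕ → Term) : Prop :=
  ∀ k < n, (∀ x ∈ (ruleAt L r k).frontier, π k x ∈ termsOf I) ∨
    ∃ j < k, ∀ x ∈ (ruleAt L r k).frontier, π k x ∈ termsOf (producedAt ν L r π j)

/-- A pieceful rule set: every derivation from every instance is pieceful. -/
def PiecefulSet (L : List Rule) : Prop :=
  ∀ ν, SONaming L ν → ∀ I, IsInstance I → ∀ n r π,
    IsDeriv ν L I n r π → PiecefulDeriv ν L I n r π

/-- First-order structures for the semantics of rules. -/
structure Struct where
  D : Type
  nonempty : Nonempty D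
  interp : ℕ → List D → Prop
  cinterp : ℕ → D

def evalT (M : Struct) (v : ℕ → M.D) : Term → M.D
  | .const c => M.cinterp c
  | .var x => v x

def holdsA (M : Struct) (v : ℕ → M.D) (a : Atom) : Prop :=
  M.interp a.pred (a.args.map (evalT M v))

/-- Satisfaction of (the universal-existential closure of) a rule in a structure. -/
def satRule (M : Struct) (R : Rule) : Prop :=
  ∀ v : ℕ → M.D, (∀ a ∈ R.body, holdsA M v a) →
    ∃ w : ℕ → M.D, (∀ x ∈ varsOf R.body, w x = v x) ∧ ∀ a ∈ R.head, holdsA M w a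

/-- Separating variables of `S' ⊆ S`: variables occurring both in `S'` and in `S \ S'`. -/
def sepVars (S' S : Set Atom) : Set ℕ := varsOf S' ∩ varsOf (S \ S')

/-- A piece-unifier `(S', H', u)` of a set of atoms `S` with a rule `R`. -/
def IsPieceUnifier (S : Set Atom) (R : Rule) (S' H' : Set Atom) (u : ℕ → Term) : Prop :=
  Disjoint (varsOf S) (varsOf (R.body ∪ R.head)) ∧
  S'.Nonempty ∧ S' ⊆ S ∧ H' ⊆ R.head ∧
  (∀ x, x ∉ R.frontier ∪ varsOf S' → u x = Term.var x) ∧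
  (∀ x ∈ R.frontier ∪ varsOf S', ∃ y ∈ varsOf R.head, u x = Term.var y) ∧
  (∀ x ∈ R.frontier, ∃ y ∈ R.frontier, u x = Term.var y) ∧
  (∀ x ∈ sepVars S' S, ∃ y ∈ R.frontier, u x = Term.var y) ∧
  substSet u S' = substSet u H'

/-- The existential stability property of a piece-unifier of `body R2` with `R1`. -/
def StableUnifier (R2 R1 : Rule) (B2' : Set Atom) (u : ℕ → Term) : Prop :=
  (∀ x ∈ R2.frontier, u x ∉ Term.var '' R1.exist) ∨ R2.frontier ⊆ varsOf B2'

/-- The existential composition `R2 ∘_μ R1` w.r.t. a piece-unifier `μ = (B2', H1', u)`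
of `body R2` with `R1`. -/
def compose (R2 R1 : Rule) (B2' : Set Atom) (u : ℕ → Term) : Rule :=
  if ∀ x ∈ R2.frontier, u x ∉ Term.var '' R1.exist then
    ⟨substSet u R1.body ∪ substSet u (R2.body \ B2'), substSet u R2.head⟩
  else
    ⟨substSet u R1.body ∪ substSet u (R2.body \ B2'),
     substSet u R1.head ∪ substSet u R2.head⟩

/-- The closure `R*` of a rule set under existential composition. -/
inductive InClosure (𝒮 : Set Rule) : Rule → Prop
  | base {R : Rule} : R ∈ 𝒮 → InClosure 𝒮 R
  | comp {Ri Rj : Rule} {B' H' : Set Atom} {u : ℕ → Term} :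
      InClosure 𝒮 Ri → InClosure 𝒮 Rj →
      IsPieceUnifier Ri.body Rj B' H' u → InClosure 𝒮 (compose Ri Rj B' u)

def ruleSet (L : List Rule) : Set Rule := {R | R ∈ L}

/-- The stability property for a (possibly infinite) rule set. -/
def StableSet (𝒮 : Set Rule) : Prop :=
  ∀ R1 ∈ 𝒮, ∀ R2 ∈ 𝒮, ∀ B2' H1' u,
    IsPieceUnifier R2.body R1 B2' H1' u → StableUnifier R2 R1 B2' u

/-- `J` is a result of one breadth-first chase step of a (possibly infinite) rule set on `I`,
with fresh pairwise-compatible nulls (semi-oblivious naming). -/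
def OneStepResult (𝒮 : Set Rule) (I J : Set Atom) : Prop :=
  ∃ ν : Rule → (ℕ → Term) → ℕ → ℕ,
    (∀ R ∈ 𝒮, ∀ f x, Term.var (ν R f x) ∉ termsOf I) ∧
    (∀ R ∈ 𝒮, ∀ R' ∈ 𝒮, ∀ f f' x x', ν R f x = ν R' f' x' →
        R = R' ∧ restrict f R.frontier = restrict f' R'.frontier ∧ x = x') ∧
    J = I ∪ {a | ∃ R ∈ 𝒮, ∃ π : ℕ → Term, isHom π R.body I ∧
                  a ∈ substSet (safeSub ν R π) R.head}

/-- `I, R ⊨ q` for a Boolean conjunctive query `q` (a set of atoms). -/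
def Entails (L : List Rule) (I q : Set Atom) : Prop :=
  ∀ ν, SONaming L ν → ∃ k σ, isHom σ q (chaseF ν L I k)

/-- The null `t` occurs in at least `n` atoms of `S`. -/
def occursInAtLeast (S : Set Atom) (t : Term) (n : ℕ) : Prop :=
  ∃ F : Set Atom, F ⊆ {a | a ∈ S ∧ t ∈ a.terms} ∧ F.Finite ∧ n ≤ F.ncard

def FrontierGuarded (R : Rule) : Prop := ∃ a ∈ R.body, R.frontier ⊆ a.vars

def IsDatalog (R : Rule) : Prop := R.exist = ∅ ∧ ∃ a, R.head = {a}

end ER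
namespace ER

lemma mem_varsOf' {S : Set Atom} {y : ℕ} : y ∈ varsOf S ↔ ∃ a ∈ S, y ∈ a.vars := by
  simp [varsOf]

lemma holdsA_congr' (M : Struct) (v w : ℕ → M.D) (a : Atom)
    (h : ∀ y ∈ a.vars, v y = w y) : holdsA M v a ↔ holdsA M w a := by
  unfold holdsA
  have : a.args.map (evalT M v) = a.args.map (evalT M w) := by
    apply List.map_congr_left
    intro t ht
    cases t with
    | const c => rfl
    | var x => exact h x ht
  rw [this]

lemma mem_vars_subst' {u : ℕ → Term} (a : Atom) (y : ℕ) :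
    y ∈ (Atom.subst u a).vars ↔ ∃ x ∈ a.vars, u x = Term.var y := by
  simp only [Atom.vars, Atom.subst, Set.mem_setOf_eq, List.mem_map]
  constructor
  · rintro ⟨t, ht, h⟩
    cases t with
    | const c => simp [Term.subst] at h
    | var x => exact ⟨x, ht, h⟩
  · rintro ⟨x, hx, h⟩
    exact ⟨Term.var x, hx, h⟩

lemma mem_varsOf_substSet' {u : ℕ → Term} (S : Set Atom) (y : ℕ) :
    y ∈ varsOf (substSet u S) ↔ ∃ x ∈ varsOf S, u x = Term.var y := by
  rw [mem_varsOf']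
  constructor
  · rintro ⟨b, hb, hy⟩
    obtain ⟨a, ha, rfl⟩ := hb
    rw [mem_vars_subst'] at hy
    obtain ⟨x, hx, h⟩ := hy
    exact ⟨x, mem_varsOf'.2 ⟨a, ha, hx⟩, h⟩
  · rintro ⟨x, hx, h⟩
    obtain ⟨a, ha, hxa⟩ := mem_varsOf'.1 hx
    exact ⟨Atom.subst u a, ⟨a, ha, rfl⟩, (mem_vars_subst' a y).2 ⟨x, hxa, h⟩⟩

lemma varsOf_mono' {A B : Set Atom} (h : A ⊆ B) : varsOf A ⊆ varsOf B := by
  intro y hy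
  obtain ⟨a, ha, h2⟩ := mem_varsOf'.1 hy
  exact mem_varsOf'.2 ⟨a, h ha, h2⟩

/-- for a piece-unifier satisfying the stability property, the compact
composition `∀x1'∀y1 ∃z1 ∀x2'∀y2' (u(B1) ∧ u(B2\B2') → ∃z2 (u(H1) ∧ u(H2)))` is logically
equivalent to the existential composition, in which all universal quantifiers precede all
existential quantifiers. -/
theorem compact_eq_existential_composition (R1 R2 : Rule) (h1 : WfRule R1) (h2 : WfRule R2)
    (hdisj : Disjoint (varsOf (R1.body ∪ R1.head)) (varsOf (R2.body ∪ R2.head)))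
    (B2' H1' : Set Atom) (u : ℕ → Term)
    (hu : IsPieceUnifier R2.body R1 B2' H1' u)
    (hst : StableUnifier R2 R1 B2' u) :
    ∀ M : Struct,
      (satRule M ⟨substSet u R1.body ∪ substSet u (R2.body \ B2'),
                  substSet u R1.head ∪ substSet u R2.head⟩
       ↔
       ∀ v0 : ℕ → M.D, ∃ v1 : ℕ → M.D,
         (∀ x, x ∉ R1.exist → v1 x = v0 x) ∧
         ∀ v2 : ℕ → M.D, (∀ x, x ∉ (varsOf R2.body \ varsOf B2') → v2 x = v1 x) →
           (∀ a ∈ substSet u R1.body ∪ substSet u (R2.body \ B2'), holdsA M v2 a) →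
           ∃ v3 : ℕ → M.D, (∀ x, x ∉ R2.exist → v3 x = v2 x) ∧
             ∀ a ∈ substSet u R1.head ∪ substSet u R2.head, holdsA M v3 a) := by
  obtain ⟨hdj, hne, hsub, hH'h, hout, hin, hfr, hsep, heq⟩ := hu
  -- disjointness of variables of R1 and R2
  have hdR : ∀ y : ℕ, (y ∈ varsOf R1.body ∨ y ∈ varsOf R1.head) →
      (y ∈ varsOf R2.body ∨ y ∈ varsOf R2.head) → False := by
    intro y h1 h2
    have e1 : y ∈ varsOf (R1.body ∪ R1.head) := by
      rcases h1 with h | h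
      · obtain ⟨a, ha, h'⟩ := mem_varsOf'.1 h
        exact mem_varsOf'.2 ⟨a, Or.inl ha, h'⟩
      · obtain ⟨a, ha, h'⟩ := mem_varsOf'.1 h
        exact mem_varsOf'.2 ⟨a, Or.inr ha, h'⟩
    have e2 : y ∈ varsOf (R2.body ∪ R2.head) := by
      rcases h2 with h | h
      · obtain ⟨a, ha, h'⟩ := mem_varsOf'.1 h
        exact mem_varsOf'.2 ⟨a, Or.inl ha, h'⟩
      · obtain ⟨a, ha, h'⟩ := mem_varsOf'.1 h
        exact mem_varsOf'.2 ⟨a, Or.inr ha, h'⟩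
    exact Set.disjoint_left.mp hdisj e1 e2
  have hB2'sub : varsOf B2' ⊆ varsOf R2.body := varsOf_mono' hsub
  have hdiffsub : varsOf (R2.body \ B2') ⊆ varsOf R2.body :=
    varsOf_mono' Set.diff_subset
  have hcover : ∀ x ∈ varsOf R2.body, x ∈ varsOf B2' ∨ x ∈ varsOf (R2.body \ B2') := by
    intro x hx
    obtain ⟨a, ha, hxa⟩ := mem_varsOf'.1 hx
    by_cases h : a ∈ B2'
    · exact Or.inl (mem_varsOf'.2 ⟨a, h, hxa⟩)
    · exact Or.inr (mem_varsOf'.2 ⟨a, ⟨ha, h⟩, hxa⟩)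
  -- classification of variables of the composed body
  have himg_body1 : ∀ y ∈ varsOf (substSet u R1.body), y ∈ varsOf R1.body := by
    intro y hy
    obtain ⟨x, hx, hxy⟩ := (mem_varsOf_substSet' _ _).1 hy
    by_cases hxf : x ∈ R1.frontier
    · obtain ⟨y', hy', h'⟩ := hfr x hxf
      rw [h'] at hxy
      injection hxy with hinj
      rw [← hinj]
      exact hy'.1
    · have hnx : x ∉ R1.frontier ∪ varsOf B2' := by
        intro h
        rcases h with h | h
        · exact hxf h
        · exact hdR x (Or.inl hx) (Or.inl (hB2'sub h))
      rw [hout x hnx] at hxy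
      injection hxy with hinj
      rw [← hinj]
      exact hx
  have hVB : ∀ y ∈ varsOf (substSet u R1.body ∪ substSet u (R2.body \ B2')),
      y ∈ varsOf R1.body ∨ y ∈ varsOf R2.body := by
    intro y hy
    obtain ⟨b, hb, hyb⟩ := mem_varsOf'.1 hy
    rcases hb with hb | hb
    · exact Or.inl (himg_body1 y (mem_varsOf'.2 ⟨b, hb, hyb⟩))
    · have hy2 : y ∈ varsOf (substSet u (R2.body \ B2')) := mem_varsOf'.2 ⟨b, hb, hyb⟩
      obtain ⟨x, hx, hxy⟩ := (mem_varsOf_substSet' _ _).1 hy2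
      by_cases hxB : x ∈ varsOf B2'
      · obtain ⟨y', hy', h'⟩ := hsep x ⟨hxB, hx⟩
        rw [h'] at hxy
        injection hxy with hinj
        rw [← hinj]
        exact Or.inl hy'.1
      · have hnx : x ∉ R1.frontier ∪ varsOf B2' := by
          intro h
          rcases h with h | h
          · exact hdR x (Or.inl h.1) (Or.inl (hdiffsub hx))
          · exact hxB h
        rw [hout x hnx] at hxy
        injection hxy with hinj
        rw [← hinj]
        exact Or.inr (hdiffsub hx)
  have hF1 : ∀ y ∈ varsOf (substSet u R1.body ∪ substSet u (R2.body \ B2')),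
      y ∉ R1.exist := by
    intro y hy hyE
    rcases hVB y hy with h | h
    · exact hyE.2 h
    · exact hdR y (Or.inr hyE.1) (Or.inl h)
  have hF2 : ∀ y ∈ varsOf (substSet u R1.body ∪ substSet u (R2.body \ B2')),
      y ∉ R2.exist := by
    intro y hy hyE
    rcases hVB y hy with h | h
    · exact hdR y (Or.inl h) (Or.inr hyE.1)
    · exact hyE.2 h
  -- classification of variables in the image of R1's head variables
  have hhead1aux : ∀ x ∈ varsOf R1.head, ∀ y : ℕ, u x = Term.var y →
      y ∈ R1.exist ∨ (y ∈ varsOf R1.body ∧ y ∈ varsOf (substSet u R1.body)) := by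
    intro x hx y hxy
    by_cases hxb : x ∈ varsOf R1.body
    · obtain ⟨y', hy', h'⟩ := hfr x ⟨hxb, hx⟩
      rw [h'] at hxy
      injection hxy with hinj
      subst hinj
      exact Or.inr ⟨hy'.1, (mem_varsOf_substSet' _ _).2 ⟨x, hxb, h'⟩⟩
    · have hnx : x ∉ R1.frontier ∪ varsOf B2' := by
        intro h
        rcases h with h | h
        · exact hxb h.1
        · exact hdR x (Or.inr hx) (Or.inl (hB2'sub h))
      rw [hout x hnx] at hxy
      injection hxy with hinj
      subst hinj
      exact Or.inl ⟨hx, hxb⟩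
  have himg_head1 : ∀ y ∈ varsOf (substSet u R1.head),
      y ∈ R1.exist ∨ (y ∈ varsOf R1.body ∧ y ∈ varsOf (substSet u R1.body)) := by
    intro y hy
    obtain ⟨x, hx, hxy⟩ := (mem_varsOf_substSet' _ _).1 hy
    exact hhead1aux x hx y hxy
  have himg_B2' : ∀ y ∈ varsOf (substSet u B2'),
      y ∈ R1.exist ∨ (y ∈ varsOf R1.body ∧ y ∈ varsOf (substSet u R1.body)) := by
    intro y hy
    rw [heq] at hy
    obtain ⟨x, hx, hxy⟩ := (mem_varsOf_substSet' _ _).1 hy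
    exact hhead1aux x (varsOf_mono' hH'h hx) y hxy
  -- classification of variables in the image of R2's head variables
  have himg_head2 : ∀ y ∈ varsOf (substSet u R2.head),
      y ∈ R2.exist ∨ y ∈ R1.exist ∨
      (y ∈ varsOf R1.body ∧ y ∈ varsOf (substSet u R1.body)) ∨
      y ∈ varsOf (substSet u (R2.body \ B2')) := by
    intro y hy
    obtain ⟨x, hx, hxy⟩ := (mem_varsOf_substSet' _ _).1 hy
    by_cases hxb : x ∈ varsOf R2.body
    · rcases hcover x hxb with hxB | hxD
      · have : y ∈ varsOf (substSet u B2') := (mem_varsOf_substSet' _ _).2 ⟨x, hxB, hxy⟩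
        rcases himg_B2' y this with h | h
        · exact Or.inr (Or.inl h)
        · exact Or.inr (Or.inr (Or.inl h))
      · exact Or.inr (Or.inr (Or.inr ((mem_varsOf_substSet' _ _).2 ⟨x, hxD, hxy⟩)))
    · have hnx : x ∉ R1.frontier ∪ varsOf B2' := by
        intro h
        rcases h with h | h
        · exact hdR x (Or.inl h.1) (Or.inr hx)
        · exact hxb (hB2'sub h)
      rw [hout x hnx] at hxy
      injection hxy with hinj
      subst hinj
      exact Or.inl ⟨hx, hxb⟩
  -- existential variables of R1 do not occur in variables of R2's body
  have hE1nR2 : ∀ y ∈ R1.exist, y ∉ varsOf R2.body \ varsOf B2' := by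
    intro y hy h
    exact hdR y (Or.inr hy.1) (Or.inl h.1)
  have hE1nE2 : ∀ y ∈ R1.exist, y ∉ R2.exist := by
    intro y hy h
    exact hdR y (Or.inr hy.1) (Or.inr h.1)
  intro M
  constructor
  · -- compact implies existential form
    intro hsat v0
    by_cases hP : ∃ v : ℕ → M.D, (∀ x, x ∉ varsOf R2.body \ varsOf B2' → v x = v0 x) ∧
        (∀ a ∈ substSet u R1.body ∪ substSet u (R2.body \ B2'), holdsA M v a)
    · obtain ⟨vh, hvh0, hvhB⟩ := hP
      obtain ⟨wh, hwh, hwhH⟩ := hsat vh hvhB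
      refine ⟨fun x => if x ∈ R1.exist then wh x else v0 x, ?_, ?_⟩
      · intro x hx
        simp [hx]
      intro v2 hv21 hBv2
      have hv2E1 : ∀ x ∈ R1.exist, v2 x = wh x := by
        intro x hx
        rw [hv21 x (hE1nR2 x hx)]
        simp [hx]
      have hv20 : ∀ x, x ∉ varsOf R2.body \ varsOf B2' → x ∉ R1.exist → v2 x = v0 x := by
        intro x h1 h2
        rw [hv21 x h1]
        simp [h2]
      rcases hst with hc1 | hc2
      · -- first stability case
        have hC1 : ∀ y ∈ varsOf (substSet u R2.head), y ∉ R1.exist := by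
          intro y hy hyE
          obtain ⟨x, hx, hxy⟩ := (mem_varsOf_substSet' _ _).1 hy
          by_cases hxb : x ∈ varsOf R2.body
          · exact hc1 x ⟨hxb, hx⟩ (by rw [hxy]; exact ⟨y, hyE, rfl⟩)
          · have hnx : x ∉ R1.frontier ∪ varsOf B2' := by
              intro h
              rcases h with h | h
              · exact hdR x (Or.inl h.1) (Or.inr hx)
              · exact hxb (hB2'sub h)
            rw [hout x hnx] at hxy
            injection hxy with hinj
            subst hinj
            exact hdR x (Or.inr hyE.1) (Or.inr hx)
        -- reset v2 on R1.exist to v0, apply the compact rule there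
        have hv2'B : ∀ a ∈ substSet u R1.body ∪ substSet u (R2.body \ B2'),
            holdsA M (fun x => if x ∈ R1.exist then v0 x else v2 x) a := by
          intro a ha
          rw [holdsA_congr' M _ v2 a ?_]
          · exact hBv2 a ha
          · intro y hya
            have hyB : y ∈ varsOf (substSet u R1.body ∪ substSet u (R2.body \ B2')) :=
              mem_varsOf'.2 ⟨a, ha, hya⟩
            simp [hF1 y hyB]
        obtain ⟨w2, hw2, hw2H⟩ := hsat _ hv2'B
        refine ⟨fun x => if x ∈ R2.exist then w2 x else v2 x, ?_, ?_⟩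
        · intro x hx
          simp [hx]
        intro a ha
        rcases ha with ha1 | ha2
        · -- atom from u(H1): use wh
          rw [holdsA_congr' M _ wh a ?_]
          · exact hwhH a (Or.inl ha1)
          intro y hya
          have hy : y ∈ varsOf (substSet u R1.head) := mem_varsOf'.2 ⟨a, ha1, hya⟩
          rcases himg_head1 y hy with hyE | ⟨hyb, hyVB⟩
          · have : y ∉ R2.exist := by
              intro h
              exact hE1nE2 y hyE h
            simp only [this, if_false]
            exact hv2E1 y hyE
          · have hyVB' : y ∈ varsOf (substSet u R1.body ∪ substSet u (R2.body \ B2')) := by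
              obtain ⟨b, hb, h'⟩ := mem_varsOf'.1 hyVB
              exact mem_varsOf'.2 ⟨b, Or.inl hb, h'⟩
            have h1 : y ∉ R1.exist := hF1 y hyVB'
            have h2 : y ∉ R2.exist := hF2 y hyVB'
            have h3 : y ∉ varsOf R2.body \ varsOf B2' := by
              intro h
              exact hdR y (Or.inl hyb) (Or.inl h.1)
            simp only [h2, if_false]
            rw [hv20 y h3 h1, hwh y hyVB', hvh0 y h3]
        · -- atom from u(H2): use w2
          rw [holdsA_congr' M _ w2 a ?_]
          · exact hw2H a (Or.inr ha2)
          intro y hya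
          have hy : y ∈ varsOf (substSet u R2.head) := mem_varsOf'.2 ⟨a, ha2, hya⟩
          have hyE1 : y ∉ R1.exist := hC1 y hy
          by_cases hyE2 : y ∈ R2.exist
          · simp [hyE2]
          · have hyVB' : y ∈ varsOf (substSet u R1.body ∪ substSet u (R2.body \ B2')) := by
              rcases himg_head2 y hy with h | h | ⟨_, h⟩ | h
              · exact absurd h hyE2
              · exact absurd h hyE1
              · obtain ⟨b, hb, h'⟩ := mem_varsOf'.1 h
                exact mem_varsOf'.2 ⟨b, Or.inl hb, h'⟩
              · obtain ⟨b, hb, h'⟩ := mem_varsOf'.1 h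
                exact mem_varsOf'.2 ⟨b, Or.inr hb, h'⟩
            simp only [hyE2, if_false]
            rw [hw2 y hyVB']
            simp [hyE1]
      · -- second stability case: the frontier of R2 is contained in Var(B2')
        have hC2 : ∀ y, (y ∈ varsOf (substSet u R1.head) ∨ y ∈ varsOf (substSet u R2.head)) →
            y ∉ varsOf R2.body := by
          intro y hy hyb2
          rcases hy with hy | hy
          · rcases himg_head1 y hy with h | ⟨h, _⟩
            · exact hdR y (Or.inr h.1) (Or.inl hyb2)
            · exact hdR y (Or.inl h) (Or.inl hyb2)
          · obtain ⟨x, hx, hxy⟩ := (mem_varsOf_substSet' _ _).1 hy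
            by_cases hxb : x ∈ varsOf R2.body
            · have hxB : x ∈ varsOf B2' := hc2 ⟨hxb, hx⟩
              have : y ∈ varsOf (substSet u B2') :=
                (mem_varsOf_substSet' _ _).2 ⟨x, hxB, hxy⟩
              rcases himg_B2' y this with h | ⟨h, _⟩
              · exact hdR y (Or.inr h.1) (Or.inl hyb2)
              · exact hdR y (Or.inl h) (Or.inl hyb2)
            · have hnx : x ∉ R1.frontier ∪ varsOf B2' := by
                intro h
                rcases h with h | h
                · exact hdR x (Or.inl h.1) (Or.inr hx)
                · exact hxb (hB2'sub h)
              rw [hout x hnx] at hxy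
              injection hxy with hinj
              subst hinj
              exact hxb hyb2
        refine ⟨fun x => if x ∈ R2.exist then wh x else v2 x, ?_, ?_⟩
        · intro x hx
          simp [hx]
        intro a ha
        rw [holdsA_congr' M _ wh a ?_]
        · exact hwhH a ha
        intro y hya
        have hyH : y ∈ varsOf (substSet u R1.head) ∨ y ∈ varsOf (substSet u R2.head) := by
          rcases ha with ha | ha
          · exact Or.inl (mem_varsOf'.2 ⟨a, ha, hya⟩)
          · exact Or.inr (mem_varsOf'.2 ⟨a, ha, hya⟩)
        have hyb2 : y ∉ varsOf R2.body := hC2 y hyH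
        have h3 : y ∉ varsOf R2.body \ varsOf B2' := fun h => hyb2 h.1
        by_cases hyE2 : y ∈ R2.exist
        · simp [hyE2]
        · simp only [hyE2, if_false]
          by_cases hyE1 : y ∈ R1.exist
          · exact hv2E1 y hyE1
          · have hyVB' : y ∈ varsOf (substSet u R1.body ∪ substSet u (R2.body \ B2')) := by
              rcases hyH with hy | hy
              · rcases himg_head1 y hy with h | ⟨_, h⟩
                · exact absurd h hyE1
                · obtain ⟨b, hb, h'⟩ := mem_varsOf'.1 h
                  exact mem_varsOf'.2 ⟨b, Or.inl hb, h'⟩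
              · rcases himg_head2 y hy with h | h | ⟨_, h⟩ | h
                · exact absurd h hyE2
                · exact absurd h hyE1
                · obtain ⟨b, hb, h'⟩ := mem_varsOf'.1 h
                  exact mem_varsOf'.2 ⟨b, Or.inl hb, h'⟩
                · obtain ⟨b, hb, h'⟩ := mem_varsOf'.1 h
                  exact mem_varsOf'.2 ⟨b, Or.inr hb, h'⟩
            rw [hv20 y h3 hyE1, hwh y hyVB', hvh0 y h3]
    · -- no satisfying variant: vacuous
      refine ⟨v0, fun x _ => rfl, ?_⟩
      intro v2 hv21 hBv2
      exact absurd ⟨v2, hv21, hBv2⟩ hP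
  · -- existential form implies compact
    intro hrhs v hvB
    obtain ⟨v1, hv1, hrest⟩ := hrhs v
    have hv2def : ∀ x, x ∉ varsOf R2.body \ varsOf B2' →
        (fun x => if x ∈ varsOf R2.body \ varsOf B2' then v x else v1 x) x = v1 x := by
      intro x hx
      simp [hx]
    have hv2v : ∀ y ∈ varsOf (substSet u R1.body ∪ substSet u (R2.body \ B2')),
        (fun x => if x ∈ varsOf R2.body \ varsOf B2' then v x else v1 x) y = v y := by
      intro y hy
      by_cases h : y ∈ varsOf R2.body \ varsOf B2'
      · simp [h]
      · simp only [h, if_false]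
        exact hv1 y (hF1 y hy)
    have hB2 : ∀ a ∈ substSet u R1.body ∪ substSet u (R2.body \ B2'),
        holdsA M (fun x => if x ∈ varsOf R2.body \ varsOf B2' then v x else v1 x) a := by
      intro a ha
      rw [holdsA_congr' M _ v a (fun y hya => hv2v y (mem_varsOf'.2 ⟨a, ha, hya⟩))]
      exact hvB a ha
    obtain ⟨v3, hv3, hH3⟩ := hrest _ hv2def hB2
    refine ⟨v3, ?_, hH3⟩
    intro x hx
    rw [hv3 x (hF2 x hx)]
    exact hv2v x hx
end ER
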